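/- Let μ and a_6 be real numbers with |a_6| < μ ≤ 0.64759, and suppose the determinant of the 4 × 4 matrix [[1, −μ, a_6, −μ], [−μ, 1, μ, μ], [a_6, μ, 1, μ], [−μ, μ, μ, 1]] equals 0. Then a_6 = (1 + μ − 4μ²) / (1 + μ). -/

import Mathlib

/-- **Step 1.** If `|a₆| < μ ≤ 0.64759` and the `4 × 4` minor on rows and columns
`{2, 5, 6, 7}` vanishes, then `a₆ = (1 + μ − 4μ²)/(1 + μ)`. -/
theorem step1 (μ a6 : ℝ) (ha : |a6| < μ) (hμ : μ ≤ 0.64759)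
    (hdet : (!![1, -μ, a6, -μ;
               -μ, 1, μ, μ;
               a6, μ, 1, μ;
               -μ, μ, μ, 1] : Matrix (Fin 4) (Fin 4) ℝ).det = 0) :
    a6 = (1 + μ - 4 * μ ^ 2) / (1 + μ) := by
  have hμ0 : 0 < μ := lt_of_le_of_lt (abs_nonneg a6) ha
  have hμ1 : μ < 1 := by linarith
  obtain ⟨hl, hr⟩ := abs_lt.mp ha
  have hfac : (μ - 1) * (a6 + 1) * ((1 + μ) * a6 - (1 + μ - 4 * μ ^ 2)) = 0 := by
    rw [show ((μ - 1) * (a6 + 1) * ((1 + μ) * a6 - (1 + μ - 4 * μ ^ 2)))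
        = (!![1, -μ, a6, -μ;
               -μ, 1, μ, μ;
               a6, μ, 1, μ;
               -μ, μ, μ, 1] : Matrix (Fin 4) (Fin 4) ℝ).det from by
      norm_num [Matrix.det_succ_row_zero, Fin.sum_univ_succ, Matrix.cons_val_two, Matrix.cons_val_three, Matrix.vecHead, Matrix.vecTail,
        show (Fin.succAbove 1 2 : Fin 4) = 3 from rfl,
        show (Fin.succAbove 2 2 : Fin 4) = 3 from rfl,
        show (Fin.castSucc 2 : Fin 4) = 2 from rfl]; ring]
    exact hdet
  have h1 : μ - 1 ≠ 0 := by linarith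
  have h2 : a6 + 1 ≠ 0 := by nlinarith
  have h3 : (1 + μ) * a6 - (1 + μ - 4 * μ ^ 2) = 0 := by
    rcases mul_eq_zero.mp hfac with h | h
    · rcases mul_eq_zero.mp h with h' | h' <;> exact absurd h' (by assumption)
    · exact h
  have h4 : (1 : ℝ) + μ ≠ 0 := by linarith
  field_simp
  linarith
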